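/- Consider the plant x_{p(k+1)} = A_p x_{pk} + B(Σ_{i=1}^p a_i f_i(x_{pk}) + u_k) with A_p ∈ ℝ^{n×n}, B ∈ ℝ^{n×m} of full column rank, a_i ∈ ℝ^m, and each f_i : ℝ^n → ℝ globally Lipschitz with f_i(0) = 0. Suppose A_m ∈ ℝ^{n×n} has spectral radius < 1 and satisfies the matching condition A_m = A_p + B K_* for some K_* ∈ ℝ^{m×n}, and the reference model is x_{m(k+1)} = A_m x_{mk} + B r_k with ‖r_k‖ ≤ r_max for all k. Let φ_k = (x_{pk}, −f_1(x_{pk}), ..., −f_p(x_{pk})) ∈ ℝ^{n+p}, let the control be u_k = Θ̂_k φ_k + r_k, the tracking error e_k = x_{pk} − x_{mk}, the prediction error ε_{k+1} = (B^⊤B)^{−1}B^⊤(e_{k+1} − A_m e_k), and update the parameter estimate by the normalized gradient-descent law N_k = max{μ, ‖φ_k‖²}, Θ̂_{k+1} = Θ̂_k − (γ/N_k) ε_{k+1} φ_k^⊤, with μ > 0 and 0 < γ < 2 and arbitrary Θ̂_0. Then lim_{k→∞} ‖e_k‖ = 0. -/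

import Mathlib

open scoped BigOperators ENNReal NNReal
open Matrix Filter

set_option maxHeartbeats 1000000

namespace GDAux


/-- Euclidean norm of a plain vector. -/
noncomputable def el2 {q : ℕ} (v : Fin q → ℝ) : ℝ := Real.sqrt (∑ i, v i ^ 2)

lemma el2_nonneg {q : ℕ} (v : Fin q → ℝ) : 0 ≤ el2 v := Real.sqrt_nonneg _

lemma el2_sq {q : ℕ} (v : Fin q → ℝ) : el2 v ^ 2 = ∑ i, v i ^ 2 :=
  Real.sq_sqrt (Finset.sum_nonneg fun i _ => sq_nonneg _)

lemma el2_eq_norm {q : ℕ} (v : Fin q → ℝ) :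
    el2 v = ‖(WithLp.equiv 2 (Fin q → ℝ)).symm v‖ := by
  rw [EuclideanSpace.norm_eq, el2]
  congr 1
  refine Finset.sum_congr rfl fun i _ => ?_
  rw [show ((WithLp.equiv 2 (Fin q → ℝ)).symm v).ofLp i = v i from rfl, Real.norm_eq_abs, sq_abs]

lemma el2_add_le {q : ℕ} (v w : Fin q → ℝ) : el2 (v + w) ≤ el2 v + el2 w := by
  rw [el2_eq_norm, el2_eq_norm, el2_eq_norm]
  have : (WithLp.equiv 2 (Fin q → ℝ)).symm (v + w)
      = (WithLp.equiv 2 (Fin q → ℝ)).symm v + (WithLp.equiv 2 (Fin q → ℝ)).symm w := rfl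
  rw [this]
  exact norm_add_le _ _

lemma pi_norm_le_el2 {q : ℕ} (v : Fin q → ℝ) : ‖v‖ ≤ el2 v := by
  refine (pi_norm_le_iff_of_nonneg (el2_nonneg v)).2 fun i => ?_
  rw [Real.norm_eq_abs, ← Real.sqrt_sq_eq_abs]
  exact Real.sqrt_le_sqrt (Finset.single_le_sum (fun j _ => sq_nonneg (v j))
    (Finset.mem_univ i))

lemma el2_le_sqrt_mul_norm {q : ℕ} (v : Fin q → ℝ) :
    el2 v ≤ Real.sqrt q * ‖v‖ := by
  rw [el2, ← Real.sqrt_sq (norm_nonneg v), ← Real.sqrt_mul (by positivity)]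
  refine Real.sqrt_le_sqrt ?_
  calc ∑ i, v i ^ 2 ≤ ∑ _i : Fin q, ‖v‖ ^ 2 := by
        refine Finset.sum_le_sum fun i _ => ?_
        have h := norm_le_pi_norm v i
        have h0 : (0:ℝ) ≤ ‖v i‖ := norm_nonneg _
        rw [Real.norm_eq_abs] at h
        nlinarith [abs_nonneg (v i), sq_abs (v i)]
    _ = (q : ℝ) * ‖v‖ ^ 2 := by simp [Finset.sum_const, Finset.card_fin, nsmul_eq_mul]

/-- Lemma C: linear contraction driven by a vanishing input converges to zero. -/
lemma tendsto_zero_of_contraction {ρ : ℝ} (hρ0 : 0 ≤ ρ) (hρ1 : ρ < 1)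
    (a b : ℕ → ℝ) (ha : ∀ k, 0 ≤ a k) (hrec : ∀ k, a (k + 1) ≤ ρ * a k + b k)
    (hb : Tendsto b atTop (nhds 0)) : Tendsto a atTop (nhds 0) := by
  rw [Metric.tendsto_atTop]
  intro ε hε
  have h1ρ : 0 < 1 - ρ := by linarith
  set δ : ℝ := ε * (1 - ρ) / 2 with hδdef
  have hδ : 0 < δ := by positivity
  obtain ⟨K, hK⟩ := (Metric.tendsto_atTop.1 hb) δ hδ
  have hbK : ∀ k ≥ K, b k ≤ δ := by
    intro k hk
    have := hK k hk
    rw [Real.dist_eq, sub_zero] at this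
    exact (le_abs_self _).trans this.le
  have claim : ∀ j, a (K + j) ≤ ρ ^ j * a K + δ / (1 - ρ) := by
    intro j
    induction j with
    | zero =>
      have : (0:ℝ) ≤ δ / (1 - ρ) := by positivity
      simpa using by linarith [ha K, this]
    | succ j ih =>
      have h1 : a (K + j + 1) ≤ ρ * a (K + j) + b (K + j) := hrec _
      have h2 : b (K + j) ≤ δ := hbK _ (Nat.le_add_right _ _)
      have h3 : ρ * a (K + j) ≤ ρ * (ρ ^ j * a K + δ / (1 - ρ)) :=
        mul_le_mul_of_nonneg_left ih hρ0
      have : K + (j + 1) = K + j + 1 := rfl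
      rw [this]
      have hd : ρ * (δ / (1 - ρ)) + δ = δ / (1 - ρ) := by field_simp; ring
      calc a (K + j + 1) ≤ ρ * (ρ ^ j * a K + δ / (1 - ρ)) + δ := by linarith
        _ = ρ ^ (j + 1) * a K + (ρ * (δ / (1 - ρ)) + δ) := by ring
        _ = ρ ^ (j + 1) * a K + δ / (1 - ρ) := by rw [hd]
  have hpow : Tendsto (fun j => ρ ^ j * a K) atTop (nhds 0) := by
    simpa using (tendsto_pow_atTop_nhds_zero_of_lt_one hρ0 hρ1).mul_const (a K)
  obtain ⟨J, hJ⟩ := (Metric.tendsto_atTop.1 hpow) (ε / 2) (by positivity)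
  refine ⟨K + J, fun k hk => ?_⟩
  have hkK : K ≤ k := le_trans (Nat.le_add_right _ _) hk
  obtain ⟨j, rfl⟩ := Nat.exists_eq_add_of_le hkK
  have hjJ : J ≤ j := by omega
  have h4 : ρ ^ j * a K < ε / 2 := by
    have := hJ j hjJ
    rw [Real.dist_eq, sub_zero] at this
    exact (le_abs_self _).trans_lt this
  have h5 : δ / (1 - ρ) = ε / 2 := by field_simp [hδdef]; ring
  have h6 := claim j
  rw [Real.dist_eq, sub_zero, abs_of_nonneg (ha _)]
  calc a (K + j) ≤ ρ ^ j * a K + δ / (1 - ρ) := h6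
    _ < ε / 2 + ε / 2 := by rw [h5]; linarith
    _ = ε := by ring

/-- Lemma D: boundedness under a contraction perturbed by a vanishing gain. -/
lemma bounded_of_contraction {ρ : ℝ} (hρ0 : 0 ≤ ρ) (hρ1 : ρ < 1)
    (a s : ℕ → ℝ) (d1 d2 : ℝ) (hd1 : 0 ≤ d1) (hd2 : 0 ≤ d2)
    (ha : ∀ k, 0 ≤ a k) (hs : ∀ k, 0 ≤ s k)
    (hrec : ∀ k, a (k + 1) ≤ ρ * a k + s k * (d1 + d2 * a k))
    (hs0 : Tendsto s atTop (nhds 0)) : ∃ V, ∀ k, a k ≤ V := by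
  have h1ρ : 0 < 1 - ρ := by linarith
  set σ : ℝ := (1 - ρ) / 2 / (d2 + 1) with hσdef
  have hσ : 0 < σ := by positivity
  obtain ⟨K, hK⟩ := (Metric.tendsto_atTop.1 hs0) σ hσ
  have hsK : ∀ k ≥ K, s k ≤ σ := fun k hk => by
    have := hK k hk; rw [Real.dist_eq, sub_zero] at this
    exact (le_abs_self _).trans this.le
  set ρ' : ℝ := (1 + ρ) / 2 with hρ'def
  have hρ'1 : ρ' < 1 := by rw [hρ'def]; linarith
  have h1ρ' : 0 < 1 - ρ' := by linarith
  set M : ℝ := max (a K) (σ * d1 / (1 - ρ')) with hMdef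
  have hM1 : a K ≤ M := le_max_left _ _
  have hM2 : σ * d1 / (1 - ρ') ≤ M := le_max_right _ _
  have hM0 : 0 ≤ M := le_trans (ha K) hM1
  have claim : ∀ j, a (K + j) ≤ M := by
    intro j
    induction j with
    | zero => simpa using hM1
    | succ j ih =>
      have hsj : s (K + j) ≤ σ := hsK _ (Nat.le_add_right _ _)
      have h1 : a (K + j + 1) ≤ ρ * a (K + j) + s (K + j) * (d1 + d2 * a (K + j)) := hrec _
      have h2 : s (K + j) * (d1 + d2 * a (K + j)) ≤ σ * d1 + σ * d2 * a (K + j) := by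
        have hnn : 0 ≤ d1 + d2 * a (K + j) := add_nonneg hd1 (mul_nonneg hd2 (ha _))
        nlinarith [hs (K + j), ha (K + j)]
      have h3 : σ * d2 ≤ (1 - ρ) / 2 := by
        rw [hσdef]
        rw [div_mul_eq_mul_div, div_le_iff₀ (by positivity)]
        nlinarith
      have h4 : σ * d1 ≤ (1 - ρ') * M := by
        rw [div_le_iff₀ h1ρ'] at hM2
        linarith [hM2]
      have : K + (j + 1) = K + j + 1 := rfl
      rw [this]
      have haj := ha (K + j)
      calc a (K + j + 1) ≤ ρ * a (K + j) + (σ * d1 + σ * d2 * a (K + j)) := by linarith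
        _ ≤ ρ * M + σ * d1 + (1 - ρ) / 2 * M := by nlinarith
        _ = ρ' * M + σ * d1 := by rw [hρ'def]; ring
        _ ≤ ρ' * M + (1 - ρ') * M := by linarith
        _ = M := by ring
  refine ⟨M + ∑ j ∈ Finset.range K, a j, fun k => ?_⟩
  rcases le_or_gt K k with h | h
  · obtain ⟨j, rfl⟩ := Nat.exists_eq_add_of_le h
    have hsum : (0:ℝ) ≤ ∑ j ∈ Finset.range K, a j :=
      Finset.sum_nonneg fun j _ => ha j
    linarith [claim j]
  · have : a k ≤ ∑ j ∈ Finset.range K, a j :=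
      Finset.single_le_sum (fun j _ => ha j) (Finset.mem_range.2 h)
    linarith



attribute [local instance] Matrix.linftyOpSeminormedAddCommGroup
  Matrix.linftyOpNormedRing Matrix.linftyOpNormedAlgebra

lemma nnnorm_map_ofReal {n : ℕ} (M : Matrix (Fin n) (Fin n) ℝ) :
    ‖M.map Complex.ofReal‖₊ = ‖M‖₊ := by
  rw [Matrix.linfty_opNNNorm_def, Matrix.linfty_opNNNorm_def]
  congr 1
  funext i
  exact Finset.sum_congr rfl fun j _ => by simp [Matrix.map_apply]

lemma pow_map_ofReal {n : ℕ} (M : Matrix (Fin n) (Fin n) ℝ) (k : ℕ) :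
    (M.map Complex.ofReal) ^ k = (M ^ k).map Complex.ofReal := by
  have h : ∀ Q : Matrix (Fin n) (Fin n) ℝ,
      Q.map Complex.ofReal = (Complex.ofRealHom.mapMatrix : Matrix (Fin n) (Fin n) ℝ →+* _) Q :=
    fun Q => rfl
  rw [h, h, ← map_pow]

/-- Schur stability gives a geometric bound on powers acting on vectors (sup norm). -/
lemma pow_bound {n : ℕ} (Am : Matrix (Fin n) (Fin n) ℝ)
    (hSchur : ∀ z ∈ spectrum ℂ (Am.map Complex.ofReal), ‖z‖ < 1) :
    ∃ C ρ : ℝ, 1 ≤ C ∧ 0 < ρ ∧ ρ < 1 ∧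
      ∀ (k : ℕ) (v : Fin n → ℝ), ‖(Am ^ k) *ᵥ v‖ ≤ C * ρ ^ k * ‖v‖ := by
  classical
  set A : Matrix (Fin n) (Fin n) ℂ := Am.map Complex.ofReal with hA
  haveI : CompleteSpace (Matrix (Fin n) (Fin n) ℂ) := FiniteDimensional.complete ℂ _
  -- a uniform strict bound on the spectrum
  obtain ⟨ρ₀, hρ₀0, hρ₀1, hρ₀⟩ : ∃ ρ₀ : ℝ, 0 ≤ ρ₀ ∧ ρ₀ < 1 ∧
      ∀ z ∈ spectrum ℂ A, ‖z‖ ≤ ρ₀ := by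
    rcases (spectrum ℂ A).eq_empty_or_nonempty with hemp | hne
    · exact ⟨0, le_refl _, one_pos, fun z hz => by simp [hemp] at hz⟩
    · obtain ⟨z₀, hz₀mem, hz₀⟩ :=
        (spectrum.isCompact A).exists_isMaxOn hne (continuous_norm.continuousOn)
      exact ⟨‖z₀‖, norm_nonneg _, hSchur z₀ hz₀mem, fun z hz => hz₀ hz⟩
  set ρ : ℝ := (ρ₀ + 1) / 2 with hρdef
  have hρ0 : 0 < ρ := by positivity
  have hρ1 : ρ < 1 := by rw [hρdef]; linarith
  have hρ₀ρ : ρ₀ < ρ := by rw [hρdef]; linarith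
  -- spectral radius < ρ
  have hrad : spectralRadius ℂ A < ENNReal.ofReal ρ := by
    have h1 : spectralRadius ℂ A ≤ ENNReal.ofReal ρ₀ := by
      rw [spectralRadius]
      refine iSup₂_le fun z hz => ?_
      have := hρ₀ z hz
      rw [← ENNReal.ofReal_coe_nnreal]
      exact ENNReal.ofReal_le_ofReal (by simpa [coe_nnnorm] using this)
    exact lt_of_le_of_lt h1 (ENNReal.ofReal_lt_ofReal_iff (by positivity) |>.2 hρ₀ρ)
  -- Gelfand
  have hG := spectrum.pow_nnnorm_pow_one_div_tendsto_nhds_spectralRadius A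
  have hev : ∀ᶠ k : ℕ in atTop, (‖A ^ k‖₊ : ℝ≥0∞) ^ (1 / (k:ℝ)) < ENNReal.ofReal ρ :=
    hG.eventually_lt_const hrad
  obtain ⟨K₀, hK₀⟩ := eventually_atTop.1 hev
  set K : ℕ := max K₀ 1 with hK
  have hpowK : ∀ k ≥ K, ‖Am ^ k‖ ≤ ρ ^ k := by
    intro k hk
    have hk1 : 1 ≤ k := le_trans (le_max_right _ _) hk
    have hk0 : (k : ℝ) ≠ 0 := Nat.cast_ne_zero.2 (by omega)
    have h := hK₀ k (le_trans (le_max_left _ _) hk)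
    have h2 : (‖A ^ k‖₊ : ℝ≥0∞) ≤ (ENNReal.ofReal ρ) ^ (k : ℝ) := by
      calc (‖A ^ k‖₊ : ℝ≥0∞) = ((‖A ^ k‖₊ : ℝ≥0∞) ^ (1 / (k:ℝ))) ^ (k:ℝ) := by
            rw [← ENNReal.rpow_mul, one_div, inv_mul_cancel₀ hk0, ENNReal.rpow_one]
        _ ≤ (ENNReal.ofReal ρ) ^ (k : ℝ) :=
            ENNReal.rpow_le_rpow h.le (by positivity)
    rw [ENNReal.rpow_natCast] at h2
    have h3 : ‖A ^ k‖ ≤ ρ ^ k := by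
      rw [← ENNReal.ofReal_pow hρ0.le] at h2
      rw [show ENNReal.ofReal (ρ ^ k) = (((ρ ^ k).toNNReal : ℝ≥0) : ℝ≥0∞) from rfl] at h2
      have h2' : ‖A ^ k‖₊ ≤ (ρ ^ k).toNNReal := ENNReal.coe_le_coe.1 h2
      calc ‖A ^ k‖ = ((‖A ^ k‖₊ : ℝ)) := rfl
        _ ≤ (((ρ ^ k).toNNReal : ℝ)) := by exact_mod_cast h2'
        _ = ρ ^ k := Real.coe_toNNReal _ (by positivity)
    calc ‖Am ^ k‖ = ‖A ^ k‖ := by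
          rw [hA, pow_map_ofReal]
          exact congrArg NNReal.toReal (nnnorm_map_ofReal (Am ^ k)).symm
      _ ≤ ρ ^ k := h3
  -- absorb the initial segment into a constant
  set C : ℝ := 1 + ∑ j ∈ Finset.range K, ‖Am ^ j‖ / ρ ^ j with hC
  have hC1 : 1 ≤ C := by
    have : (0:ℝ) ≤ ∑ j ∈ Finset.range K, ‖Am ^ j‖ / ρ ^ j :=
      Finset.sum_nonneg fun j _ => div_nonneg (norm_nonneg _) (by positivity)
    rw [hC]; linarith
  refine ⟨C, ρ, hC1, hρ0, hρ1, fun k v => ?_⟩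
  have hbound : ‖Am ^ k‖ ≤ C * ρ ^ k := by
    rcases lt_or_ge k K with h | h
    · have h1 : ‖Am ^ k‖ / ρ ^ k ≤ ∑ j ∈ Finset.range K, ‖Am ^ j‖ / ρ ^ j :=
        Finset.single_le_sum (f := fun j => ‖Am ^ j‖ / ρ ^ j)
          (fun j _ => div_nonneg (norm_nonneg _) (by positivity)) (Finset.mem_range.2 h)
      have h2 : ‖Am ^ k‖ / ρ ^ k ≤ C := by rw [hC]; linarith
      rw [div_le_iff₀ (by positivity)] at h2
      linarith [h2]
    · calc ‖Am ^ k‖ ≤ ρ ^ k := hpowK k h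
        _ ≤ C * ρ ^ k := le_mul_of_one_le_left (by positivity) hC1
  calc ‖(Am ^ k) *ᵥ v‖ ≤ ‖Am ^ k‖ * ‖v‖ := Matrix.linfty_opNorm_mulVec _ _
    _ ≤ C * ρ ^ k * ‖v‖ := mul_le_mul_of_nonneg_right hbound (norm_nonneg _)



lemma lyap {m q : ℕ} (T : Matrix (Fin m) (Fin q) ℝ) (φv : Fin q → ℝ) (c : ℝ)
    (εv : Fin m → ℝ) (hεv : T *ᵥ φv = εv) :
    ∑ i, ∑ j, ((T - c • Matrix.vecMulVec εv φv) i j) ^ 2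
      = ∑ i, ∑ j, (T i j) ^ 2 - 2 * c * (∑ i, εv i ^ 2)
        + c ^ 2 * (∑ j, φv j ^ 2) * (∑ i, εv i ^ 2) := by
  have hrow : ∀ i, (∑ j, T i j * φv j) = εv i := fun i => by
    rw [← hεv]; simp [Matrix.mulVec, dotProduct]
  have hstep : ∀ i, ∑ j, ((T - c • Matrix.vecMulVec εv φv) i j) ^ 2
      = ∑ j, (T i j) ^ 2 - 2 * c * εv i ^ 2 + c ^ 2 * εv i ^ 2 * (∑ j, φv j ^ 2) := by
    intro i
    have h1 : ∀ j, ((T - c • Matrix.vecMulVec εv φv) i j) ^ 2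
        = (T i j) ^ 2 - 2 * c * εv i * (T i j * φv j) + c ^ 2 * εv i ^ 2 * (φv j) ^ 2 := by
      intro j
      simp only [Matrix.sub_apply, Matrix.smul_apply, Matrix.vecMulVec_apply, smul_eq_mul]
      ring
    simp_rw [h1]
    rw [Finset.sum_add_distrib, Finset.sum_sub_distrib, ← Finset.mul_sum, ← Finset.mul_sum,
      hrow i]
    ring
  simp_rw [hstep]
  rw [Finset.sum_add_distrib, Finset.sum_sub_distrib, ← Finset.mul_sum]
  have h2 : ∑ x : Fin m, c ^ 2 * εv x ^ 2 * (∑ j, φv j ^ 2)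
      = c ^ 2 * (∑ x, εv x ^ 2) * (∑ j, φv j ^ 2) := by
    rw [← Finset.sum_mul, ← Finset.mul_sum]
  rw [h2]
  ring



lemma exists_gauge {n : ℕ} (Am : Matrix (Fin n) (Fin n) ℝ) (C ρ : ℝ) (hC : 1 ≤ C)
    (hρ0 : 0 < ρ) (hρ1 : ρ < 1)
    (hpow : ∀ (k : ℕ) (v : Fin n → ℝ), ‖(Am ^ k) *ᵥ v‖ ≤ C * ρ ^ k * ‖v‖) :
    ∃ g : (Fin n → ℝ) → ℝ, (∀ v, ‖v‖ ≤ g v) ∧ (∀ v, g v ≤ C * ‖v‖) ∧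
      (∀ v w, g (v + w) ≤ g v + g w) ∧ (∀ v, g (Am *ᵥ v) ≤ ρ * g v) := by
  set F : (Fin n → ℝ) → ℕ → ℝ := fun v k => ‖(Am ^ k) *ᵥ v‖ / ρ ^ k with hF
  have hFle : ∀ v k, F v k ≤ C * ‖v‖ := by
    intro v k
    rw [hF, div_le_iff₀ (by positivity)]
    calc ‖(Am ^ k) *ᵥ v‖ ≤ C * ρ ^ k * ‖v‖ := hpow k v
      _ = C * ‖v‖ * ρ ^ k := by ring
  have hbdd : ∀ v, BddAbove (Set.range (F v)) :=
    fun v => ⟨C * ‖v‖, fun x ⟨k, hk⟩ => hk ▸ hFle v k⟩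
  set g : (Fin n → ℝ) → ℝ := fun v => ⨆ k, F v k with hg
  have hle : ∀ v, ‖v‖ ≤ g v := by
    intro v
    have h0 : F v 0 = ‖v‖ := by rw [hF]; simp [Matrix.one_mulVec]
    rw [hg, ← h0]
    exact le_ciSup (hbdd v) 0
  have hub : ∀ v, g v ≤ C * ‖v‖ := fun v => ciSup_le (hFle v)
  refine ⟨g, hle, hub, ?_, ?_⟩
  · intro v w
    refine ciSup_le fun k => ?_
    have h1 : F (v + w) k ≤ F v k + F w k := by
      rw [hF]
      simp only
      rw [Matrix.mulVec_add, ← add_div]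
      exact div_le_div_of_nonneg_right (norm_add_le _ _) (by positivity)
    exact h1.trans (add_le_add (le_ciSup (hbdd v) k) (le_ciSup (hbdd w) k))
  · intro v
    refine ciSup_le fun k => ?_
    have h1 : F (Am *ᵥ v) k = ρ * F v (k + 1) := by
      rw [hF]
      simp only
      rw [Matrix.mulVec_mulVec, ← pow_succ, pow_succ ρ k]
      field_simp
    rw [h1]
    exact mul_le_mul_of_nonneg_left (le_ciSup (hbdd v) (k + 1)) hρ0.le


end GDAux

attribute [local instance] Matrix.linftyOpSeminormedAddCommGroup
  Matrix.linftyOpNormedRing Matrix.linftyOpNormedAlgebra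

open scoped BigOperators
open Matrix


/-- adaptive control of the nonlinear plant with the normalized
    gradient-descent adaptive law drives the tracking error to zero. -/
theorem gd_adaptive_control_tracking_error_to_zero {n m p : ℕ}
    (Ap Am : Matrix (Fin n) (Fin n) ℝ) (B : Matrix (Fin n) (Fin m) ℝ)
    (a : Fin p → Fin m → ℝ) (f : Fin p → (Fin n → ℝ) → ℝ) (Mf : Fin p → ℝ)
    (hB : Function.Injective B.mulVec)
    (hLip : ∀ i, ∀ x y : Fin n → ℝ,
      |f i x - f i y| ≤ Mf i * Real.sqrt (∑ j, (x j - y j) ^ 2))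
    (hf0 : ∀ i, f i 0 = 0)
    (hSchur : ∀ z ∈ spectrum ℂ (Am.map Complex.ofReal), ‖z‖ < 1)
    (Kstar : Matrix (Fin m) (Fin n) ℝ) (hmatch : Am = Ap + B * Kstar)
    (r : ℕ → Fin m → ℝ) (rmax : ℝ)
    (hr : ∀ k, Real.sqrt (∑ i, r k i ^ 2) ≤ rmax)
    (xp xm : ℕ → Fin n → ℝ) (u : ℕ → Fin m → ℝ)
    (Θhat : ℕ → Matrix (Fin m) (Fin (n + p)) ℝ)
    (φ : ℕ → Fin (n + p) → ℝ)
    (hφ : ∀ k, φ k = Fin.append (xp k) (fun i => -f i (xp k)))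
    (hplant : ∀ k, xp (k + 1)
      = Ap.mulVec (xp k) + B.mulVec ((∑ i, f i (xp k) • a i) + u k))
    (hu : ∀ k, u k = (Θhat k).mulVec (φ k) + r k)
    (href : ∀ k, xm (k + 1) = Am.mulVec (xm k) + B.mulVec (r k))
    (e : ℕ → Fin n → ℝ) (he : ∀ k, e k = xp k - xm k)
    (ε : ℕ → Fin m → ℝ)
    (hεdef : ∀ k, ε (k + 1)
      = (Bᵀ * B)⁻¹.mulVec (Bᵀ.mulVec (e (k + 1) - Am.mulVec (e k))))
    (μ γ : ℝ) (hμ : 0 < μ) (hγ0 : 0 < γ) (hγ2 : γ < 2)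
    (N : ℕ → ℝ) (hN : ∀ k, N k = max μ (∑ j, φ k j ^ 2))
    (hupd : ∀ k, Θhat (k + 1)
      = Θhat k - (γ / N k) • Matrix.vecMulVec (ε (k + 1)) (φ k)) :
    Filter.Tendsto (fun k => Real.sqrt (∑ i, e k i ^ 2))
      Filter.atTop (nhds 0) := by

  classical
  -- the true parameter matrix
  set Θstar : Matrix (Fin m) (Fin (n + p)) ℝ :=
    (fun i => Fin.append (fun j => Kstar i j) (fun i' => a i' i)) with hΘs
  set T : ℕ → Matrix (Fin m) (Fin (n + p)) ℝ := fun k => Θhat k - Θstar with hTdef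
  have hΘφ : ∀ k, Θstar *ᵥ φ k = Kstar *ᵥ xp k - ∑ i, f i (xp k) • a i := by
    intro k
    funext i
    have hl : (Θstar *ᵥ φ k) i = ∑ j, Θstar i j * φ k j := by
      simp [Matrix.mulVec, dotProduct]
    have hr : (Kstar *ᵥ xp k) i = ∑ j, Kstar i j * xp k j := by
      simp [Matrix.mulVec, dotProduct]
    have ha2 : (∑ i', f i' (xp k) • a i') i = ∑ i', f i' (xp k) * a i' i := by
      simp [Finset.sum_apply, Pi.smul_apply, smul_eq_mul]
    rw [Pi.sub_apply, hl, hr, ha2, hφ k]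
    rw [Fin.sum_univ_add (f := fun j =>
      Θstar i j * (Fin.append (xp k) (fun i' => -f i' (xp k))) j)]
    simp only [hΘs, Fin.append_left, Fin.append_right]
    rw [sub_eq_add_neg, ← Finset.sum_neg_distrib]
    congr 1
    exact Finset.sum_congr rfl fun i' _ => by ring
  have hEdyn : ∀ k, e (k + 1) = Am *ᵥ e k + B *ᵥ (T k *ᵥ φ k) := by
    intro k
    have h1 := he (k + 1)
    rw [hplant k, href k, hu k] at h1
    rw [h1, hTdef]
    simp only [Matrix.sub_mulVec, hΘφ k]
    rw [he k, hmatch]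
    simp only [Matrix.add_mulVec, Matrix.mulVec_add, Matrix.mulVec_sub,
      ← Matrix.mulVec_mulVec]
    abel
  have hdet : IsUnit (Bᵀ * B).det := by
    have hinj : Function.Injective (Bᵀ * B).mulVec := by
      intro x y hxy
      have h0 : (Bᵀ * B) *ᵥ (x - y) = 0 := by
        rw [Matrix.mulVec_sub, hxy, sub_self]
      have h2 : (x - y) ⬝ᵥ ((Bᵀ * B) *ᵥ (x - y)) = (B *ᵥ (x - y)) ⬝ᵥ (B *ᵥ (x - y)) := by
        rw [← Matrix.mulVec_mulVec, Matrix.dotProduct_mulVec, Matrix.vecMul_transpose]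
      rw [h0, dotProduct_zero] at h2
      have h3 : B *ᵥ (x - y) = 0 := dotProduct_self_eq_zero.1 h2.symm
      rw [Matrix.mulVec_sub, sub_eq_zero] at h3
      exact hB h3
    exact (Matrix.isUnit_iff_isUnit_det _).1 (Matrix.mulVec_injective_iff_isUnit.1 hinj)
  have hε : ∀ k, ε (k + 1) = T k *ᵥ φ k := by
    intro k
    have h1 : e (k + 1) - Am *ᵥ e k = B *ᵥ (T k *ᵥ φ k) := by
      rw [hEdyn k]; abel
    rw [hεdef k, h1, Matrix.mulVec_mulVec, Matrix.mulVec_mulVec, Matrix.mul_assoc,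
      Matrix.nonsing_inv_mul _ hdet, Matrix.one_mulVec]
  -- normalization facts
  have hNpos : ∀ k, 0 < N k := by
    intro k; rw [hN k]; exact lt_of_lt_of_le hμ (le_max_left _ _)
  have hPN : ∀ k, (∑ j, φ k j ^ 2) ≤ N k := by
    intro k; rw [hN k]; exact le_max_right _ _
  set t : ℕ → ℝ := fun k => (∑ i, ε (k + 1) i ^ 2) / N k with htdef
  have ht0 : ∀ k, 0 ≤ t k := fun k =>
    div_nonneg (Finset.sum_nonneg fun i _ => sq_nonneg _) (hNpos k).le
  set V : ℕ → ℝ := fun k => ∑ i, ∑ j, (T k i j) ^ 2 with hVdef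
  have hV0 : ∀ k, 0 ≤ V k := fun k =>
    Finset.sum_nonneg fun i _ => Finset.sum_nonneg fun j _ => sq_nonneg _
  have hTupd : ∀ k, T (k + 1) = T k - (γ / N k) • Matrix.vecMulVec (ε (k + 1)) (φ k) := by
    intro k
    show Θhat (k + 1) - Θstar = Θhat k - Θstar - (γ / N k) • Matrix.vecMulVec (ε (k + 1)) (φ k)
    rw [hupd k]
    exact sub_right_comm _ _ _
  have hVstep : ∀ k, V (k + 1) ≤ V k - (γ * (2 - γ)) * t k := by
    intro k
    have hid := GDAux.lyap (T k) (φ k) (γ / N k) (ε (k + 1)) (hε k).symm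
    have hVk1 : V (k + 1)
        = ∑ i, ∑ j, ((T k - (γ / N k) • Matrix.vecMulVec (ε (k + 1)) (φ k)) i j) ^ 2 := by
      show (∑ i, ∑ j, (T (k + 1) i j) ^ 2) = _
      rw [hTupd k]
    have hVk : V k = ∑ i, ∑ j, (T k i j) ^ 2 := rfl
    rw [hVk1, hid, ← hVk]
    set Sε := ∑ i, ε (k + 1) i ^ 2 with hSdef
    set P := ∑ j, φ k j ^ 2 with hPdef
    set c := γ / N k with hcdef
    have hNk := hNpos k
    have hc : c * N k = γ := div_mul_cancel₀ γ (ne_of_gt hNk)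
    have htN : t k * N k = Sε := div_mul_cancel₀ _ (ne_of_gt hNk)
    have hkey : 0 ≤ c ^ 2 * t k * N k * (N k - P) :=
      mul_nonneg (mul_nonneg (mul_nonneg (sq_nonneg _) (ht0 k)) hNk.le)
        (sub_nonneg.2 (hPN k))
    rw [← hc, ← htN]
    nlinarith [hkey]
  set κ : ℝ := γ * (2 - γ) with hκ
  have hκpos : 0 < κ := by rw [hκ]; nlinarith
  have hpart : ∀ K : ℕ, κ * (∑ k ∈ Finset.range K, t k) + V K ≤ V 0 := by
    intro K
    induction K with
    | zero => simp
    | succ K ih =>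
      rw [Finset.sum_range_succ, mul_add]
      have := hVstep K
      linarith
  have hsumle : ∀ K : ℕ, (∑ k ∈ Finset.range K, t k) ≤ V 0 / κ := by
    intro K
    rw [le_div_iff₀ hκpos]
    nlinarith [hpart K, hV0 K]
  have hsummable : Summable t := summable_of_sum_range_le ht0 hsumle
  have htt : Filter.Tendsto t Filter.atTop (nhds 0) := hsummable.tendsto_atTop_zero
  set s : ℕ → ℝ := fun k => Real.sqrt (t k) with hsdef
  have hs0 : ∀ k, 0 ≤ s k := fun k => Real.sqrt_nonneg _
  have hst : Filter.Tendsto s Filter.atTop (nhds 0) := by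
    have h := (Real.continuous_sqrt.tendsto 0).comp htt
    simpa [Function.comp_def, Real.sqrt_zero, hsdef] using h
  have hεeq : ∀ k, GDAux.el2 (ε (k + 1)) = s k * Real.sqrt (N k) := by
    intro k
    have h1 : t k * N k = ∑ i, ε (k + 1) i ^ 2 := div_mul_cancel₀ _ (ne_of_gt (hNpos k))
    calc GDAux.el2 (ε (k + 1)) = Real.sqrt (t k * N k) := by rw [h1]; rfl
      _ = s k * Real.sqrt (N k) := Real.sqrt_mul (ht0 k) _
  -- geometric stability of Am
  obtain ⟨C, ρ, hC1, hρ0, hρ1, hpow⟩ := GDAux.pow_bound Am hSchur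
  obtain ⟨g, hg1, hg2, hg3, hg4⟩ := GDAux.exists_gauge Am C ρ hC1 hρ0 hρ1 hpow
  have hg0 : ∀ v, 0 ≤ g v := fun v => le_trans (norm_nonneg v) (hg1 v)
  set CB : ℝ := C * ‖B‖ with hCB
  have hCB0 : 0 ≤ CB := mul_nonneg (by linarith) (norm_nonneg _)
  have hgB : ∀ w : Fin m → ℝ, g (B *ᵥ w) ≤ CB * GDAux.el2 w := by
    intro w
    have h1 : ‖B *ᵥ w‖ ≤ ‖B‖ * ‖w‖ := Matrix.linfty_opNorm_mulVec B w
    have h2 : ‖w‖ ≤ GDAux.el2 w := GDAux.pi_norm_le_el2 w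
    calc g (B *ᵥ w) ≤ C * ‖B *ᵥ w‖ := hg2 _
      _ ≤ CB * GDAux.el2 w := by
          rw [hCB]
          nlinarith [norm_nonneg B, norm_nonneg w, norm_nonneg (B *ᵥ w)]
  -- the reference trajectory is bounded
  set rmax' : ℝ := max rmax 0 with hrm
  have hrb : ∀ k, GDAux.el2 (r k) ≤ rmax' := fun k => le_trans (hr k) (le_max_left _ _)
  have h1ρ : 0 < 1 - ρ := by linarith
  set Mx : ℝ := max (g (xm 0)) (CB * rmax' / (1 - ρ)) with hMx
  have hxmg : ∀ k, g (xm k) ≤ Mx := by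
    intro k
    induction k with
    | zero => exact le_max_left _ _
    | succ k ih =>
      have hrmax'0 : 0 ≤ rmax' := le_max_right _ _
      have hstep : g (xm (k + 1)) ≤ ρ * g (xm k) + CB * rmax' := by
        rw [href k]
        calc g (Am *ᵥ xm k + B *ᵥ r k) ≤ g (Am *ᵥ xm k) + g (B *ᵥ r k) := hg3 _ _
          _ ≤ ρ * g (xm k) + CB * GDAux.el2 (r k) := add_le_add (hg4 _) (hgB _)
          _ ≤ ρ * g (xm k) + CB * rmax' := by
              nlinarith [hrb k, hCB0, GDAux.el2_nonneg (r k)]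
      have h2 : CB * rmax' ≤ (1 - ρ) * Mx := by
        have h3 : CB * rmax' / (1 - ρ) ≤ Mx := le_max_right _ _
        rw [div_le_iff₀ h1ρ] at h3
        linarith
      have h4 := mul_le_mul_of_nonneg_left ih hρ0.le
      calc g (xm (k + 1)) ≤ ρ * g (xm k) + CB * rmax' := hstep
        _ ≤ ρ * Mx + (1 - ρ) * Mx := by linarith
        _ = Mx := by ring
  have hMx0 : 0 ≤ Mx := le_trans (hg0 (xm 0)) (le_max_left _ _)
  -- regressor bound
  set cf : ℝ := Real.sqrt (1 + ∑ i, Mf i ^ 2) with hcf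
  have hcf0 : 0 ≤ cf := Real.sqrt_nonneg _
  have hφel2 : ∀ k, GDAux.el2 (φ k) ≤ cf * GDAux.el2 (xp k) := by
    intro k
    have hsplit : (∑ j, φ k j ^ 2)
        = (∑ j : Fin n, xp k j ^ 2) + ∑ i : Fin p, (f i (xp k)) ^ 2 := by
      rw [hφ k]
      rw [Fin.sum_univ_add (f := fun j =>
        ((Fin.append (xp k) (fun i' => -f i' (xp k))) j) ^ 2)]
      simp [Fin.append_left, Fin.append_right]
    have hfi : ∀ i, (f i (xp k)) ^ 2 ≤ Mf i ^ 2 * (GDAux.el2 (xp k)) ^ 2 := by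
      intro i
      have h1 := hLip i (xp k) 0
      simp only [hf0 i, sub_zero, Pi.zero_apply] at h1
      have h2 : |f i (xp k)| ≤ Mf i * GDAux.el2 (xp k) := h1
      have h3 := mul_le_mul h2 h2 (abs_nonneg _) (le_trans (abs_nonneg _) h2)
      rw [abs_mul_abs_self] at h3
      nlinarith [h3]
    have hsum : (∑ j, φ k j ^ 2) ≤ (1 + ∑ i, Mf i ^ 2) * (GDAux.el2 (xp k)) ^ 2 := by
      calc (∑ j, φ k j ^ 2)
          = (GDAux.el2 (xp k)) ^ 2 + ∑ i : Fin p, (f i (xp k)) ^ 2 := by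
            rw [hsplit, GDAux.el2_sq]
        _ ≤ (GDAux.el2 (xp k)) ^ 2 + ∑ i : Fin p, Mf i ^ 2 * (GDAux.el2 (xp k)) ^ 2 := by
            have := Finset.sum_le_sum (fun i (_ : i ∈ Finset.univ) => hfi i)
            linarith
        _ = (1 + ∑ i, Mf i ^ 2) * (GDAux.el2 (xp k)) ^ 2 := by
            rw [← Finset.sum_mul]; ring
    have h4 : Real.sqrt (∑ j, φ k j ^ 2)
        ≤ Real.sqrt ((1 + ∑ i, Mf i ^ 2) * (GDAux.el2 (xp k)) ^ 2) :=
      Real.sqrt_le_sqrt hsum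
    rw [Real.sqrt_mul (by positivity), Real.sqrt_sq (GDAux.el2_nonneg _)] at h4
    exact h4
  have hxpel2 : ∀ k, GDAux.el2 (xp k) ≤ Real.sqrt n * (g (e k) + Mx) := by
    intro k
    have hx : xp k = e k + xm k := by rw [he k]; abel
    have hn0 : (0 : ℝ) ≤ Real.sqrt n := Real.sqrt_nonneg _
    have h1 : ‖e k‖ ≤ g (e k) := hg1 _
    have h2 : ‖xm k‖ ≤ Mx := le_trans (hg1 _) (hxmg k)
    rw [hx]
    calc GDAux.el2 (e k + xm k) ≤ GDAux.el2 (e k) + GDAux.el2 (xm k) :=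
          GDAux.el2_add_le _ _
      _ ≤ Real.sqrt n * ‖e k‖ + Real.sqrt n * ‖xm k‖ :=
          add_le_add (GDAux.el2_le_sqrt_mul_norm _) (GDAux.el2_le_sqrt_mul_norm _)
      _ ≤ Real.sqrt n * (g (e k) + Mx) := by nlinarith
  set d2 : ℝ := cf * Real.sqrt n with hd2
  have hd20 : 0 ≤ d2 := mul_nonneg hcf0 (Real.sqrt_nonneg _)
  set d1 : ℝ := Real.sqrt μ + d2 * Mx with hd1
  have hd10 : 0 ≤ d1 := add_nonneg (Real.sqrt_nonneg _) (mul_nonneg hd20 hMx0)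
  have hsqN : ∀ k, Real.sqrt (N k) ≤ d1 + d2 * g (e k) := by
    intro k
    have hμs : μ = (Real.sqrt μ) ^ 2 := (Real.sq_sqrt hμ.le).symm
    have hφs : (∑ j, φ k j ^ 2) = (GDAux.el2 (φ k)) ^ 2 := (GDAux.el2_sq _).symm
    have h2 : N k ≤ (Real.sqrt μ + GDAux.el2 (φ k)) ^ 2 := by
      rw [hN k]
      refine max_le ?_ ?_ <;>
        nlinarith [GDAux.el2_nonneg (φ k), Real.sqrt_nonneg μ]
    have h1 : Real.sqrt (N k) ≤ Real.sqrt μ + GDAux.el2 (φ k) := by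
      calc Real.sqrt (N k) ≤ Real.sqrt ((Real.sqrt μ + GDAux.el2 (φ k)) ^ 2) :=
            Real.sqrt_le_sqrt h2
        _ = Real.sqrt μ + GDAux.el2 (φ k) :=
            Real.sqrt_sq (add_nonneg (Real.sqrt_nonneg _) (GDAux.el2_nonneg _))
    have h5 := hφel2 k
    have h6 := hxpel2 k
    have h7 : GDAux.el2 (φ k) ≤ cf * (Real.sqrt n * (g (e k) + Mx)) := by
      nlinarith [GDAux.el2_nonneg (xp k)]
    calc Real.sqrt (N k) ≤ Real.sqrt μ + GDAux.el2 (φ k) := h1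
      _ ≤ Real.sqrt μ + cf * (Real.sqrt n * (g (e k) + Mx)) := by linarith
      _ = d1 + d2 * g (e k) := by rw [hd1, hd2]; ring
  have hrec : ∀ k, g (e (k + 1)) ≤ ρ * g (e k) + (CB * s k) * (d1 + d2 * g (e k)) := by
    intro k
    have hsN0 : 0 ≤ Real.sqrt (N k) := Real.sqrt_nonneg _
    calc g (e (k + 1)) = g (Am *ᵥ e k + B *ᵥ (T k *ᵥ φ k)) := by rw [hEdyn k]
      _ ≤ g (Am *ᵥ e k) + g (B *ᵥ (T k *ᵥ φ k)) := hg3 _ _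
      _ ≤ ρ * g (e k) + CB * GDAux.el2 (T k *ᵥ φ k) := add_le_add (hg4 _) (hgB _)
      _ = ρ * g (e k) + CB * (s k * Real.sqrt (N k)) := by rw [← hε k, hεeq k]
      _ ≤ ρ * g (e k) + (CB * s k) * (d1 + d2 * g (e k)) := by
          nlinarith [hsqN k, hCB0, hs0 k, mul_nonneg hCB0 (hs0 k)]
  have hs'0 : Filter.Tendsto (fun k => CB * s k) Filter.atTop (nhds 0) := by
    simpa using hst.const_mul CB
  obtain ⟨Vb, hVb⟩ := GDAux.bounded_of_contraction hρ0.le hρ1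
    (fun k => g (e k)) (fun k => CB * s k) d1 d2 hd10 hd20
    (fun k => hg0 _) (fun k => mul_nonneg hCB0 (hs0 k)) hrec hs'0
  set b : ℕ → ℝ := fun k => (CB * (d1 + d2 * Vb)) * s k with hb
  have hbrec : ∀ k, g (e (k + 1)) ≤ ρ * g (e k) + b k := by
    intro k
    have h1 := hrec k
    have h2 : (CB * s k) * (d1 + d2 * g (e k)) ≤ b k := by
      rw [hb]; simp only
      have h3 : g (e k) ≤ Vb := hVb k
      nlinarith [mul_nonneg (mul_nonneg hCB0 (hs0 k))
        (mul_nonneg hd20 (sub_nonneg.2 h3))]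
    linarith
  have hbt : Filter.Tendsto b Filter.atTop (nhds 0) := by
    simpa using hst.const_mul (CB * (d1 + d2 * Vb))
  have hge0 := GDAux.tendsto_zero_of_contraction hρ0.le hρ1
    (fun k => g (e k)) b (fun k => hg0 _) hbrec hbt
  have hfin : ∀ k, Real.sqrt (∑ i, e k i ^ 2) ≤ Real.sqrt n * g (e k) := by
    intro k
    calc Real.sqrt (∑ i, e k i ^ 2) = GDAux.el2 (e k) := rfl
      _ ≤ Real.sqrt n * ‖e k‖ := GDAux.el2_le_sqrt_mul_norm _
      _ ≤ Real.sqrt n * g (e k) :=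
          mul_le_mul_of_nonneg_left (hg1 _) (Real.sqrt_nonneg _)
  refine squeeze_zero (fun k => Real.sqrt_nonneg _) hfin ?_
  simpa using hge0.const_mul (Real.sqrt n)
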